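/- Let L be a finite set, θ₀, θ₁ : L → ℝ, and w₀, w₁, ε ∈ ℝ with w₀ + w₁ = 1, w₁ > 0, and w₀w₁ > ε. Define α(i) = w₀θ₀(i) + w₁θ₁(i) and β(i,j) = (w₀ − ε)θ₀(i)θ₀(j) + (w₁ − ε)θ₁(i)θ₁(j) + ε·θ₀(i)θ₁(j) + ε·θ₁(i)θ₀(j). Then for every i ∈ L: θ₀(i) = α(i) + √(β(i,i) − α(i)²)/√(w₀/w₁ − ε/w₁²) or θ₀(i) = α(i) − √(β(i,i) − α(i)²)/√(w₀/w₁ − ε/w₁²), and in either case θ₁(i) = (α(i) − w₀θ₀(i))/w₁. -/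

import Mathlib

theorem stmt_8 {L : Type*} [Fintype L] (θ₀ θ₁ : L → ℝ) (w₀ w₁ ε : ℝ)
    (hw : w₀ + w₁ = 1) (hw1 : w₁ > 0) (hwe : w₀ * w₁ > ε)
    (α : L → ℝ) (hα : ∀ i, α i = w₀ * θ₀ i + w₁ * θ₁ i)
    (β : L → L → ℝ)
    (hβ : ∀ i j, β i j = (w₀ - ε) * (θ₀ i * θ₀ j) + (w₁ - ε) * (θ₁ i * θ₁ j)
        + ε * (θ₀ i * θ₁ j) + ε * (θ₁ i * θ₀ j)) :
    ∀ i, (θ₀ i = α i + Real.sqrt (β i i - (α i) ^ 2) / Real.sqrt (w₀ / w₁ - ε / w₁ ^ 2) ∨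
          θ₀ i = α i - Real.sqrt (β i i - (α i) ^ 2) / Real.sqrt (w₀ / w₁ - ε / w₁ ^ 2)) ∧
         θ₁ i = (α i - w₀ * θ₀ i) / w₁ := by
  intro i
  have hw0 : w₀ = 1 - w₁ := by linarith
  subst hw0
  have hd : (1 - w₁) * w₁ - ε > 0 := by linarith
  set d := θ₀ i - θ₁ i with hdd
  have h1 : β i i - (α i) ^ 2 = ((1 - w₁) * w₁ - ε) * d ^ 2 := by
    rw [hβ, hα, hdd]; ring
  have h2 : (1 - w₁) / w₁ - ε / w₁ ^ 2 = ((1 - w₁) * w₁ - ε) / w₁ ^ 2 := by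
    field_simp
  have h3 : Real.sqrt (β i i - (α i) ^ 2) = Real.sqrt ((1 - w₁) * w₁ - ε) * |d| := by
    rw [h1, Real.sqrt_mul hd.le, Real.sqrt_sq_eq_abs]
  have h4 : Real.sqrt ((1 - w₁) / w₁ - ε / w₁ ^ 2) = Real.sqrt ((1 - w₁) * w₁ - ε) / w₁ := by
    rw [h2, Real.sqrt_div hd.le, Real.sqrt_sq hw1.le]
  have hs : Real.sqrt ((1 - w₁) * w₁ - ε) > 0 := Real.sqrt_pos.mpr hd
  have h5 : Real.sqrt (β i i - (α i) ^ 2) / Real.sqrt ((1 - w₁) / w₁ - ε / w₁ ^ 2)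
      = w₁ * |d| := by
    rw [h3, h4, div_div_eq_mul_div, mul_assoc, mul_div_cancel_left₀ _ hs.ne']; ring
  have hθα : θ₀ i = α i + w₁ * d := by rw [hα, hdd]; ring
  constructor
  · rcases abs_cases d with ⟨h, _⟩ | ⟨h, _⟩
    · left; rw [h5, h, ← hθα]
    · right; rw [h5, h, hθα]; ring
  · rw [hα]; field_simp; ring
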